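/- Let G be a graph and S a tree-structured set with elimination tree T of depth at most k. Then for every connected component C of G - S there is a subset S(C) ⊆ S of size at most k such that C is a connected component of G - S(C). -/

import Mathlib

/-- `C` is (the vertex set of) a connected component of the subgraph of `G` induced by `A`. -/
def IsCompOf {V : Type*} (G : SimpleGraph V) (A : Set V) (C : Set V) : Prop :=
  ∃ c : (G.induce A).ConnectedComponent, C = Subtype.val '' c.supp

/-- `S` is tree-structured with elimination tree given by the ancestor relation `anc`
(transported along the bijection to the vertex set of the tree): `anc` restricted to `S`
is a partial order, ancestors of any element form a chain, there is a root (if `S ≠ ∅`),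
and every path in `G` between two vertices `u, v ∈ S` contains a vertex `w ∈ S` that is a
common ancestor of `u` and `v`. -/
def IsElimTree {V : Type*} (G : SimpleGraph V) (S : Set V) (anc : V → V → Prop) : Prop :=
  (∀ u ∈ S, anc u u) ∧
  (∀ u ∈ S, ∀ v ∈ S, anc u v → anc v u → u = v) ∧
  (∀ u ∈ S, ∀ v ∈ S, ∀ w ∈ S, anc u v → anc v w → anc u w) ∧
  (∀ u ∈ S, ∀ v ∈ S, ∀ w ∈ S, anc u w → anc v w → anc u v ∨ anc v u) ∧
  (S.Nonempty → ∃ r ∈ S, ∀ u ∈ S, anc r u) ∧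
  (∀ u ∈ S, ∀ v ∈ S, ∀ p : G.Walk u v, ∃ w ∈ p.support, w ∈ S ∧ anc w u ∧ anc w v)

/-- The elimination tree has depth at most `k`: every element of `S` has at most `k`
ancestors (including itself). -/
def ElimDepthLE {V : Type*} (S : Set V) (anc : V → V → Prop) (k : ℕ) : Prop :=
  ∀ u ∈ S, {w ∈ S | anc w u}.ncard ≤ k

/-- If `S` is tree-structured with an elimination tree of depth at most `k`, then for every
connected component `C` of `G - S` there is a subset `S₀ ⊆ S` of size at most `k`
such that `C` is a connected component of `G - S₀`. -/

private def induceHomVal {V : Type*} (G : SimpleGraph V) (A : Set V) :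
    G.induce A →g G := ⟨Subtype.val, fun h => h⟩

private def induceHomLE {V : Type*} (G : SimpleGraph V) {A B : Set V} (h : A ⊆ B) :
    G.induce A →g G.induce B := ⟨fun a => ⟨a.1, h a.2⟩, fun hadj => hadj⟩

private lemma exists_top {α : Type*} (r : α → α → Prop) :
    ∀ (F : Finset α), (∀ a ∈ F, ∀ b ∈ F, r a b ∨ r b a) →
    (∀ a ∈ F, ∀ b ∈ F, ∀ c ∈ F, r a b → r b c → r a c) →
    F.Nonempty → ∃ m ∈ F, ∀ a ∈ F, r a m := by
  classical
  intro F
  induction F using Finset.induction_on with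
  | empty => intro _ _ h; exact absurd h (by simp)
  | insert a₀ F ha ih =>
    intro htot htr _
    have ha₀mem : a₀ ∈ insert a₀ F := Finset.mem_insert_self _ _
    have hra : r a₀ a₀ := by
      rcases htot a₀ ha₀mem a₀ ha₀mem with h' | h' <;> exact h'
    by_cases hF : F.Nonempty
    · obtain ⟨m, hm, hmax⟩ := ih (fun x hx y hy =>
          htot x (Finset.mem_insert_of_mem hx) y (Finset.mem_insert_of_mem hy))
        (fun x hx y hy z hz => htr x (Finset.mem_insert_of_mem hx)
          y (Finset.mem_insert_of_mem hy) z (Finset.mem_insert_of_mem hz)) hF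
      have hmmem : m ∈ insert a₀ F := Finset.mem_insert_of_mem hm
      rcases htot a₀ ha₀mem m hmmem with h | h
      · refine ⟨m, hmmem, ?_⟩
        intro x hx
        rcases Finset.mem_insert.mp hx with rfl | hx
        · exact h
        · exact hmax x hx
      · refine ⟨a₀, ha₀mem, ?_⟩
        intro x hx
        rcases Finset.mem_insert.mp hx with rfl | hx
        · exact hra
        · exact htr x (Finset.mem_insert_of_mem hx) m hmmem a₀ ha₀mem (hmax x hx) h
    · refine ⟨a₀, ha₀mem, ?_⟩
      intro x hx
      rcases Finset.mem_insert.mp hx with rfl | hx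
      · exact hra
      · exact absurd ⟨x, hx⟩ hF

theorem stmt10 {V : Type*} [Fintype V] (G : SimpleGraph V) (S : Set V)
    (anc : V → V → Prop) (hT : IsElimTree G S anc) (k : ℕ) (hdepth : ElimDepthLE S anc k) :
    ∀ C : Set V, IsCompOf G Sᶜ C →
      ∃ S₀ ⊆ S, S₀.ncard ≤ k ∧ IsCompOf G S₀ᶜ C := by
  classical
  obtain ⟨hrefl, hanti, htrans, hchain, hroot, hpath⟩ := hT
  intro C hC
  obtain ⟨c, hCc⟩ := hC
  set S₀ : Set V := {w | w ∈ S ∧ ∃ x ∈ C, G.Adj w x} with hS₀def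
  have hS₀S : S₀ ⊆ S := fun w hw => hw.1
  have hCS : C ⊆ Sᶜ := by
    rintro x hx; rw [hCc] at hx; obtain ⟨y, _, rfl⟩ := hx; exact y.2
  -- C is closed under adjacency into Sᶜ
  have hclosed : ∀ x ∈ C, ∀ y, y ∈ Sᶜ → G.Adj x y → y ∈ C := by
    intro x hx y hy hxy
    rw [hCc] at hx ⊢
    obtain ⟨v, hv, rfl⟩ := hx
    have hadj : (G.induce Sᶜ).Adj v ⟨y, hy⟩ := hxy
    refine ⟨⟨y, hy⟩, ?_, rfl⟩
    rw [SimpleGraph.ConnectedComponent.mem_supp_iff] at hv ⊢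
    rw [← hv]
    exact (SimpleGraph.ConnectedComponent.sound hadj.reachable).symm
  -- S₀ is a chain under anc
  have htotal : ∀ u ∈ S₀, ∀ v ∈ S₀, anc u v ∨ anc v u := by
    rintro u ⟨huS, cu, hcu, hucu⟩ v ⟨hvS, cv, hcv, hvcv⟩
    have hcuS : cu ∈ Sᶜ := hCS hcu
    have hcvS : cv ∈ Sᶜ := hCS hcv
    have hreach : (G.induce Sᶜ).Reachable ⟨cu, hcuS⟩ ⟨cv, hcvS⟩ := by
      rw [hCc] at hcu hcv
      obtain ⟨v1, hv1, hv1e⟩ := hcu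
      obtain ⟨v2, hv2, hv2e⟩ := hcv
      rw [SimpleGraph.ConnectedComponent.mem_supp_iff] at hv1 hv2
      have e1 : v1 = ⟨cu, hcuS⟩ := Subtype.ext hv1e
      have e2 : v2 = ⟨cv, hcvS⟩ := Subtype.ext hv2e
      rw [e1] at hv1; rw [e2] at hv2
      exact SimpleGraph.ConnectedComponent.exact (hv1.trans hv2.symm)
    obtain ⟨p⟩ := hreach
    obtain ⟨w, hwsup, hwS, hwu, hwv⟩ := hpath u huS v hvS
      (SimpleGraph.Walk.cons hucu ((p.map (induceHomVal G Sᶜ)).append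
        (SimpleGraph.Walk.cons hvcv.symm SimpleGraph.Walk.nil)))
    have hw : w = u ∨ w = v := by
      erw [SimpleGraph.Walk.support_cons, List.mem_cons,
        SimpleGraph.Walk.mem_support_append_iff, SimpleGraph.Walk.support_map,
        SimpleGraph.Walk.support_cons] at hwsup
      simp only [SimpleGraph.Walk.support_cons, List.mem_cons,
        SimpleGraph.Walk.mem_support_append_iff, SimpleGraph.Walk.support_map,
        SimpleGraph.Walk.support_nil, List.mem_singleton, List.mem_map] at hwsup
      rcases hwsup with rfl | hwsup | hwsup
      · exact Or.inl rfl
      · exfalso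
        obtain ⟨z, _, rfl⟩ := hwsup
        exact z.2 hwS
      · rcases hwsup with rfl | hwsup
        · exact absurd hwS hcvS
        · rcases hwsup with rfl | hwsup
          · exact Or.inr rfl
          · simp at hwsup
    rcases hw with rfl | rfl
    · exact Or.inl hwv
    · exact Or.inr hwu
  refine ⟨S₀, hS₀S, ?_, ?_⟩
  · -- cardinality bound
    rcases Set.eq_empty_or_nonempty S₀ with h0 | h0
    · simp [h0]
    · have hfin : S₀.Finite := Set.toFinite _
      obtain ⟨m, hm, hmax⟩ := exists_top anc hfin.toFinset
        (by intro a ha b hb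
            rw [Set.Finite.mem_toFinset] at ha hb
            exact htotal a ha b hb)
        (by intro a ha b hb c' hc'
            rw [Set.Finite.mem_toFinset] at ha hb hc'
            exact htrans a (hS₀S ha) b (hS₀S hb) c' (hS₀S hc'))
        (by rw [Set.Finite.toFinset_nonempty]; exact h0)
      rw [Set.Finite.mem_toFinset] at hm
      have hsub : S₀ ⊆ {w ∈ S | anc w m} := by
        intro w hw
        exact ⟨hS₀S hw, hmax w (Set.Finite.mem_toFinset hfin |>.mpr hw)⟩
      calc S₀.ncard ≤ {w ∈ S | anc w m}.ncard :=
            Set.ncard_le_ncard hsub (Set.toFinite _)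
        _ ≤ k := hdepth m (hS₀S hm)
  · -- C is a component of G - S₀
    have hCS₀ : C ⊆ S₀ᶜ := fun x hx h => (hCS hx) (hS₀S h)
    obtain ⟨v₀, hv₀⟩ := c.exists_rep
    have hc₀C : (v₀ : V) ∈ C := by rw [hCc]; exact ⟨v₀, by rw [SimpleGraph.ConnectedComponent.mem_supp_iff]; exact hv₀, rfl⟩
    set c₀ : V := v₀.val
    have hc₀ : c₀ ∈ S₀ᶜ := hCS₀ hc₀C
    refine ⟨(G.induce S₀ᶜ).connectedComponentMk ⟨c₀, hc₀⟩, ?_⟩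
    -- key: walks in induce S₀ᶜ stay in C
    have hkey : ∀ (a b : ↥(S₀ᶜ)) (p : (G.induce S₀ᶜ).Walk a b), a.val ∈ C → b.val ∈ C := by
      intro a b p
      induction p with
      | nil => exact id
      | @cons a b' b h p ih =>
        intro ha
        have hb' : b'.val ∈ C := by
          by_cases hbS : b'.val ∈ S
          · exfalso
            exact b'.2 ⟨hbS, a.val, ha, (h : G.Adj a.val b'.val).symm⟩
          · exact hclosed a.val ha b'.val hbS h
        exact ih hb'
    ext x
    constructor
    · intro hx
      have hxS : x ∈ Sᶜ := hCS hx
      have hxS₀ : x ∈ S₀ᶜ := hCS₀ hx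
      have hreach : (G.induce Sᶜ).Reachable ⟨c₀, hCS hc₀C⟩ ⟨x, hxS⟩ := by
        rw [hCc] at hx
        obtain ⟨z, hz, hze⟩ := hx
        rw [SimpleGraph.ConnectedComponent.mem_supp_iff] at hz
        have ez : z = ⟨x, hxS⟩ := Subtype.ext hze
        rw [ez] at hz
        have hv : (G.induce Sᶜ).connectedComponentMk v₀ = c := hv₀
        have ev : v₀ = ⟨c₀, hCS hc₀C⟩ := Subtype.ext rfl
        rw [ev] at hv
        exact SimpleGraph.ConnectedComponent.exact (hv.trans hz.symm)
      have hreach' := hreach.map (induceHomLE G (Set.compl_subset_compl.mpr hS₀S))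
      refine ⟨⟨x, hxS₀⟩, ?_, rfl⟩
      rw [SimpleGraph.ConnectedComponent.mem_supp_iff]
      exact (SimpleGraph.ConnectedComponent.sound hreach'.symm)
    · rintro ⟨z, hz, rfl⟩
      rw [SimpleGraph.ConnectedComponent.mem_supp_iff] at hz
      have hr : (G.induce S₀ᶜ).Reachable ⟨c₀, hc₀⟩ z :=
        SimpleGraph.ConnectedComponent.exact hz.symm
      obtain ⟨p⟩ := hr
      exact hkey _ _ p hc₀C
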